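/- Let M be a standard Borel space, A_sat a sub-σ-algebra of its Borel σ-algebra, m a probability measure on M, and π : M → P(M) the conditional measure map x ↦ m_x. For any standard Borel space X and any Borel measurable map f : M → X that is A_sat-measurable, there exists a measurable map 𝔣 : P(M) → X such that f = 𝔣 ∘ π m-almost everywhere. -/

import Mathlib

open MeasureTheory ProbabilityTheory

theorem stmt1aux {M X : Type*} (Asat : MeasurableSpace M)
    [mM : MeasurableSpace M] [StandardBorelSpace M] [Nonempty M]
    [MeasurableSpace X] [StandardBorelSpace X] [Nonempty X]
    (m : Measure M) [IsProbabilityMeasure m]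
    (hle : Asat ≤ mM)
    (f : M → X) (hf : Measurable[Asat] f) :
    ∃ F : Measure M → X, Measurable F ∧
      (fun x => F (condExpKernel m Asat x)) =ᵐ[m] f := by
  -- embed X into ℝ with bounded range
  obtain ⟨e, he⟩ := exists_measurableEmbedding_real X
  set ψ : X → ℝ := fun x => Real.arctan (e x) with hψdef
  have hψmeas : Measurable ψ := Real.measurable_arctan.comp he.measurable
  have hψinj : Function.Injective ψ := Real.arctan_injective.comp he.injective
  have hψemb : MeasurableEmbedding ψ := hψmeas.measurableEmbedding hψinj
  obtain ⟨F', hF'meas, hF'comp⟩ :=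
    hψemb.exists_measurable_extend measurable_id (fun _ => ⟨Classical.arbitrary X⟩)
  -- the bounded real-valued version of f
  set h : M → ℝ := fun x => ψ (f x) with hhdef
  have hhAsat : Measurable[Asat] h := hψmeas.comp hf
  have hhmeas : Measurable h := hhAsat.mono hle le_rfl
  have hbound : ∀ x, |h x| ≤ 2 := by
    intro x
    rw [abs_le]
    constructor
    · have := Real.neg_pi_div_two_lt_arctan (e (f x))
      have := Real.pi_le_four
      simp only [hhdef, hψdef]
      linarith
    · have := Real.arctan_lt_pi_div_two (e (f x))
      have := Real.pi_le_four
      simp only [hhdef, hψdef]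
      linarith
  have hboundint : ∀ (μ : Measure M) [IsFiniteMeasure μ], Integrable h μ := by
    intro μ _
    exact (integrable_const (2 : ℝ)).mono' hhmeas.aestronglyMeasurable
      (Filter.Eventually.of_forall fun x => by
        simpa [Real.norm_eq_abs] using hbound x)
  have hint : Integrable h m := hboundint m
  -- conditional expectation of h is h itself
  have hcond : m[h|Asat] = h :=
    condExp_of_stronglyMeasurable hle hhAsat.stronglyMeasurable hint
  have hae : (fun x => ∫ y, h y ∂condExpKernel m Asat x) =ᵐ[m] h := by
    have := condExp_ae_eq_integral_condExpKernel hle hint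
    rw [hcond] at this
    exact this.symm
  -- the measurable functional on measures
  set G : @Measure M mM → ℝ := fun μ =>
    (∫⁻ y, ENNReal.ofReal (h y + 2) ∂μ).toReal - 2 * (μ Set.univ).toReal with hGdef
  have hGmeas : Measurable G := by
    apply Measurable.sub
    · exact (Measure.measurable_lintegral
        (ENNReal.measurable_ofReal.comp (hhmeas.add measurable_const))).ennreal_toReal
    · exact ((Measure.measurable_coe MeasurableSet.univ).ennreal_toReal).const_mul 2
  -- G computes the integral of h against any probability measure
  have hGprob : ∀ (μ : Measure M) [IsProbabilityMeasure μ], G μ = ∫ y, h y ∂μ := by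
    intro μ _
    have hintμ : Integrable h μ := hboundint μ
    have hintμ' : Integrable (fun y => h y + 2) μ := hintμ.add (integrable_const 2)
    have hlin : ∫⁻ y, ENNReal.ofReal (h y + 2) ∂μ = ENNReal.ofReal (∫ y, (h y + 2) ∂μ) := by
      rw [MeasureTheory.ofReal_integral_eq_lintegral_ofReal hintμ'
        (Filter.Eventually.of_forall fun x => by
          show (0:ℝ) ≤ h x + 2
          have := abs_le.mp (hbound x); linarith [this.1])]
    have hnn : 0 ≤ ∫ y, (h y + 2) ∂μ := by
      apply integral_nonneg
      intro x
      show (0:ℝ) ≤ h x + 2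
      have := abs_le.mp (hbound x); linarith [this.1]
    rw [hGdef]
    simp only [hlin, ENNReal.toReal_ofReal hnn, measure_univ, ENNReal.toReal_one]
    rw [integral_add hintμ (integrable_const 2), integral_const]
    simp
  refine ⟨F' ∘ G, hF'meas.comp hGmeas, ?_⟩
  filter_upwards [hae] with x hx
  have : @Kernel.toFun M M Asat mM (condExpKernel m Asat) x = condExpKernel m Asat x := rfl
  simp only [Function.comp_apply, this]
  have hprob : IsProbabilityMeasure (condExpKernel m Asat x) := inferInstance
  rw [hGprob (condExpKernel m Asat x), hx]
  exact congrFun hF'comp (f x)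


/-- Factorization through the conditional measure map: if `f : M → X` is `A_sat`-measurable
(with `X` standard Borel), then there is a measurable map `𝔣` on the space of probability
measures on `M` such that `f = 𝔣 ∘ π` `m`-a.e., where `π x = m_x` is the conditional measure. -/
theorem stmt1 {M X : Type*} [mM : MeasurableSpace M] [StandardBorelSpace M] [Nonempty M]
    [MeasurableSpace X] [StandardBorelSpace X] [Nonempty X]
    (m : Measure M) [IsProbabilityMeasure m]
    (Asat : MeasurableSpace M) (hle : Asat ≤ mM)
    (f : M → X) (hf : Measurable[Asat] f) :
    ∃ F : @Measure M mM → X, Measurable F ∧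
      (fun x => F (@Kernel.toFun M M Asat mM (@condExpKernel M mM _ m _ Asat) x)) =ᵐ[m] f :=
  stmt1aux (mM := mM) Asat m hle f hf
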